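/- In the sub-affine λ¢, subject reduction holds: if Γ ⊢ t : A and t →_p r (a one-step probabilistic reduction), then Γ ⊢ r : A. -/
import Mathlib


/-- Terms of λ¢ (de Bruijn): variables, abstraction, application,
    booleans `one`/`zero`, if-then-else, and a coin. -/
inductive Tm : Type
  | var : Nat → Tm
  | lam : Tm → Tm
  | app : Tm → Tm → Tm
  | one : Tm
  | zero : Tm
  | ite : Tm → Tm → Tm → Tm
  | coin : Tm
  deriving DecidableEq

/-- Lifting of de Bruijn indices (indices ≥ d are incremented). -/
def lift (d : Nat) : Tm → Tm
  | .var n => if n < d then .var n else .var (n+1)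
  | .lam t => .lam (lift (d+1) t)
  | .app t u => .app (lift d t) (lift d u)
  | .one => .one
  | .zero => .zero
  | .ite c a b => .ite (lift d c) (lift d a) (lift d b)
  | .coin => .coin

/-- Capture-avoiding substitution `t[s/k]` (de Bruijn). -/
def subst : Tm → Nat → Tm → Tm
  | .var n, k, s => if n = k then s else if k < n then .var (n-1) else .var n
  | .lam t, k, s => .lam (subst t (k+1) (lift 0 s))
  | .app t u, k, s => .app (subst t k s) (subst u k s)
  | .one, _, _ => .one
  | .zero, _, _ => .zero
  | .ite c a b, k, s => .ite (subst c k s) (subst a k s) (subst b k s)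
  | .coin, _, _ => .coin

/-- One-step probabilistic reduction `t →_p r` of λ¢:
    β, if-rules (probability 1), coin toss (probability 1/2 each),
    closed under all contexts. -/
inductive Step : Tm → ℚ → Tm → Prop
  | beta (t r) : Step (.app (.lam t) r) 1 (subst t 0 r)
  | iteOne (a b) : Step (.ite .one a b) 1 a
  | iteZero (a b) : Step (.ite .zero a b) 1 b
  | coinOne : Step .coin (1/2) .one
  | coinZero : Step .coin (1/2) .zero
  | lam {t p t'} : Step t p t' → Step (.lam t) p (.lam t')
  | appL {t p t'} (u) : Step t p t' → Step (.app t u) p (.app t' u)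
  | appR {u p u'} (t) : Step u p u' → Step (.app t u) p (.app t u')
  | iteC {c p c'} (a b) : Step c p c' → Step (.ite c a b) p (.ite c' a b)
  | iteA {a p a'} (c b) : Step a p a' → Step (.ite c a b) p (.ite c a' b)
  | iteB {b p b'} (c a) : Step b p b' → Step (.ite c a b) p (.ite c a b')

/-- A term is normal if no probabilistic step applies. -/
def NormalTm (t : Tm) : Prop := ¬ ∃ p r, Step t p r

/-- (Sub)probability distributions over terms, as finitely supported maps. -/
abbrev PDist := Tm →₀ ℚ

/-- Contraction of one redex occurrence of a term, producing the
    distribution of its results: deterministic rules give a Dirac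
    distribution, a coin redex splits 1/2–1/2; closed under contexts. -/
inductive TStep : Tm → PDist → Prop
  | beta (t r) : TStep (.app (.lam t) r) (Finsupp.single (subst t 0 r) 1)
  | iteOne (a b) : TStep (.ite .one a b) (Finsupp.single a 1)
  | iteZero (a b) : TStep (.ite .zero a b) (Finsupp.single b 1)
  | coin : TStep .coin (Finsupp.single Tm.one (1/2) + Finsupp.single Tm.zero (1/2))
  | lam {t D} : TStep t D → TStep (.lam t) (D.mapDomain .lam)
  | appL {t D} (u) : TStep t D → TStep (.app t u) (D.mapDomain (fun s => .app s u))
  | appR {u D} (t) : TStep u D → TStep (.app t u) (D.mapDomain (fun s => .app t s))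
  | iteC {c D} (a b) : TStep c D → TStep (.ite c a b) (D.mapDomain (fun s => .ite s a b))
  | iteA {a D} (c b) : TStep a D → TStep (.ite c a b) (D.mapDomain (fun s => .ite c s b))
  | iteB {b D} (c a) : TStep b D → TStep (.ite c a b) (D.mapDomain (fun s => .ite c a s))

/-- One distribution-reduction step: pick a term `t` in the support,
    contract one redex occurrence of `t` and redistribute its probability
    mass accordingly (equal results are merged by the `Finsupp` addition). -/
def DStep (D D' : PDist) : Prop :=
  ∃ t E, D t ≠ 0 ∧ TStep t E ∧ D' = D.erase t + D t • E

/-- Multistep distribution reduction. -/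
def DSteps : PDist → PDist → Prop := Relation.ReflTransGen DStep

/-- A distribution is normal when every term in its support is normal. -/
def NormalDist (D : PDist) : Prop := ∀ t ∈ D.support, NormalTm t

/-- Simple types: booleans and arrows. -/
inductive Ty : Type
  | bool : Ty
  | arrow : Ty → Ty → Ty
  deriving DecidableEq

/-- Typing contexts for the (sub-)affine systems: a partial assignment of
    types to de Bruijn indices. -/
abbrev Ctx := Nat → Option Ty

/-- Extend a context with a (possibly absent) type for the new index 0. -/
def Ctx.cons (A : Option Ty) (Γ : Ctx) : Ctx := fun n =>
  match n with
  | 0 => A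
  | m+1 => Γ m

/-- Disjointness of contexts. -/
def Ctx.disj (Γ Δ : Ctx) : Prop := ∀ n, Γ n = none ∨ Δ n = none

/-- Union of (disjoint) contexts. -/
def Ctx.union (Γ Δ : Ctx) : Ctx := fun n => (Γ n).orElse (fun _ => Δ n)

/-- The empty context. -/
def Ctx.empty : Ctx := fun _ => none

/-- Sub-affine type system: affine, except that the two branches of an
    if-then-else may share their typing context. -/
inductive SubTy : Ctx → Tm → Ty → Prop
  | var {Γ n A} : Γ n = some A → SubTy Γ (.var n) A
  | lam {Γ t A B} : SubTy (Ctx.cons (some A) Γ) t B → SubTy Γ (.lam t) (.arrow A B)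
  | app {Γ Δ t u A B} : Ctx.disj Γ Δ →
      SubTy Γ t (.arrow A B) → SubTy Δ u A → SubTy (Ctx.union Γ Δ) (.app t u) B
  | one {Γ} : SubTy Γ .one .bool
  | zero {Γ} : SubTy Γ .zero .bool
  | coin {Γ} : SubTy Γ .coin .bool
  | ite {Γ Δ c a b A} : Ctx.disj Γ Δ →
      SubTy Γ c .bool → SubTy Δ a A → SubTy Δ b A →
      SubTy (Ctx.union Γ Δ) (.ite c a b) A


/-! ### Auxiliary machinery for subject reduction -/

/-- Remove index `k` from a context (shifting indices above `k` down). -/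
def Ctx.remove (Γ : Ctx) (k : Nat) : Ctx := fun n => if n < k then Γ n else Γ (n+1)

/-- Insert a hole at index `d` in a context. -/
def Ctx.liftAt (d : Nat) (Γ : Ctx) : Ctx := fun n =>
  if n < d then Γ n else if n = d then none else Γ (n-1)

lemma Ctx.union_some_left {Γ Δ : Ctx} {n B} (h : Γ n = some B) :
    Ctx.union Γ Δ n = some B := by unfold Ctx.union; rw [h]; rfl

lemma Ctx.union_none_left {Γ Δ : Ctx} {n} (h : Γ n = none) :
    Ctx.union Γ Δ n = Δ n := by unfold Ctx.union; rw [h]; rfl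

lemma Ctx.union_cases {Γ Δ : Ctx} {n B} (h : Ctx.union Γ Δ n = some B) :
    Γ n = some B ∨ (Γ n = none ∧ Δ n = some B) := by
  unfold Ctx.union at h
  cases hg : Γ n with
  | none => right; rw [hg] at h; exact ⟨rfl, h⟩
  | some C => left; rw [hg] at h; exact h

lemma Ctx.union_eq_none {Γ Δ : Ctx} {n} (h : Ctx.union Γ Δ n = none) :
    Γ n = none ∧ Δ n = none := by
  unfold Ctx.union at h
  cases hg : Γ n with
  | none => rw [hg] at h; exact ⟨rfl, h⟩
  | some C => rw [hg] at h; exact absurd h (by simp)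

/-- Monotonicity (weakening): typing is preserved under enlarging the context. -/
theorem SubTy.mono {Γ : Ctx} {t : Tm} {A : Ty} (h : SubTy Γ t A) :
    ∀ {Γ' : Ctx}, (∀ n B, Γ n = some B → Γ' n = some B) → SubTy Γ' t A := by
  induction h with
  | var h => exact fun hs => .var (hs _ _ h)
  | lam _ ih =>
      intro Γ' hs
      refine .lam (ih ?_)
      intro n B hb
      cases n with
      | zero => exact hb
      | succ m => exact hs m B hb
  | @app Γ₁ Δ₁ t u A B hd h1 h2 ih1 ih2 =>
      intro Γ' hs
      have hΓ' : Γ' = Ctx.union (fun n => if (Γ₁ n).isSome then Γ' n else none)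
          (fun n => if (Γ₁ n).isSome then none else Γ' n) := by
        funext n
        cases hg : Γ₁ n with
        | none =>
            have h0 : (fun n => if (Γ₁ n).isSome then Γ' n else none) n = none := by
              simp [hg]
            rw [Ctx.union_none_left h0]
            simp [hg]
        | some C =>
            have := hs n C (Ctx.union_some_left hg)
            rw [this]
            exact (Ctx.union_some_left (by simp [hg, this])).symm
      rw [hΓ']
      refine .app ?_ (ih1 ?_) (ih2 ?_)
      · intro n; by_cases hg : (Γ₁ n).isSome <;> simp [hg]
      · intro n B hb
        have := hs n B (Ctx.union_some_left hb)
        simp [hb, this]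
      · intro n B hb
        have hg : Γ₁ n = none := by
          rcases hd n with h' | h'
          · exact h'
          · rw [h'] at hb; exact absurd hb (by simp)
        have := hs n B (by rw [Ctx.union_none_left hg]; exact hb)
        simp [hg, this]
  | one => exact fun _ => .one
  | zero => exact fun _ => .zero
  | coin => exact fun _ => .coin
  | @ite Γ₁ Δ₁ c a b A hd hc ha hb ihc iha ihb =>
      intro Γ' hs
      have hΓ' : Γ' = Ctx.union (fun n => if (Γ₁ n).isSome then Γ' n else none)
          (fun n => if (Γ₁ n).isSome then none else Γ' n) := by
        funext n
        cases hg : Γ₁ n with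
        | none =>
            have h0 : (fun n => if (Γ₁ n).isSome then Γ' n else none) n = none := by
              simp [hg]
            rw [Ctx.union_none_left h0]
            simp [hg]
        | some C =>
            have := hs n C (Ctx.union_some_left hg)
            rw [this]
            exact (Ctx.union_some_left (by simp [hg, this])).symm
      rw [hΓ']
      refine .ite ?_ (ihc ?_) (iha ?_) (ihb ?_)
      · intro n; by_cases hg : (Γ₁ n).isSome <;> simp [hg]
      · intro n B hb'
        have := hs n B (Ctx.union_some_left hb')
        simp [hb', this]
      all_goals {
        intro n B hb'
        have hg : Γ₁ n = none := by
          rcases hd n with h' | h'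
          · exact h'
          · rw [h'] at hb'; exact absurd hb' (by simp)
        have := hs n B (by rw [Ctx.union_none_left hg]; exact hb')
        simp [hg, this] }

lemma Ctx.liftAt_cons (d : Nat) (a : Option Ty) (Γ : Ctx) :
    Ctx.liftAt (d+1) (Ctx.cons a Γ) = Ctx.cons a (Ctx.liftAt d Γ) := by
  funext n
  cases n with
  | zero => simp [Ctx.liftAt, Ctx.cons]
  | succ m =>
      simp only [Ctx.liftAt, Ctx.cons]
      rcases Nat.lt_trichotomy m d with h | h | h
      · simp [h, Nat.succ_lt_succ h]
      · simp [h]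
      · have h1 : ¬ m + 1 < d + 1 := by omega
        have h3 : ¬ m + 1 = d + 1 := by omega
        have h2 : ¬ m < d := by omega
        have h4 : ¬ m = d := by omega
        rw [if_neg h1, if_neg h3, if_neg h2, if_neg h4]
        obtain ⟨j, rfl⟩ : ∃ j, m = j + 1 := ⟨m - 1, by omega⟩
        rfl

lemma Ctx.liftAt_union (d : Nat) (Γ Δ : Ctx) :
    Ctx.liftAt d (Ctx.union Γ Δ) = Ctx.union (Ctx.liftAt d Γ) (Ctx.liftAt d Δ) := by
  funext n
  simp only [Ctx.liftAt, Ctx.union]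
  by_cases h1 : n < d
  · simp [h1]
  · by_cases h2 : n = d <;> simp [h1, h2]

lemma Ctx.liftAt_disj {Γ Δ : Ctx} (d : Nat) (h : Ctx.disj Γ Δ) :
    Ctx.disj (Ctx.liftAt d Γ) (Ctx.liftAt d Δ) := by
  intro n
  simp only [Ctx.liftAt]
  by_cases h1 : n < d
  · simpa [h1] using h n
  · by_cases h2 : n = d
    · simp [h1, h2]
    · simpa [h1, h2] using h (n-1)

/-- Lifting lemma. -/
theorem SubTy.liftTy {Γ : Ctx} {t : Tm} {A : Ty} (h : SubTy Γ t A) :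
    ∀ d, SubTy (Ctx.liftAt d Γ) (lift d t) A := by
  induction h with
  | @var Γ n A h =>
      intro d
      by_cases hn : n < d
      · simp only [lift, if_pos hn]
        exact .var (by simp [Ctx.liftAt, hn, h])
      · simp only [lift, if_neg hn]
        refine .var ?_
        have h1 : ¬ n + 1 < d := by omega
        have h2 : ¬ n + 1 = d := by omega
        simp [Ctx.liftAt, h1, h2, h]
  | lam _ ih =>
      intro d
      exact .lam (by rw [← Ctx.liftAt_cons]; exact ih (d+1))
  | app hd _ _ ih1 ih2 =>
      intro d
      rw [show (lift d (.app _ _) : Tm) = .app (lift d _) (lift d _) from rfl, Ctx.liftAt_union]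
      exact .app (Ctx.liftAt_disj d hd) (ih1 d) (ih2 d)
  | one => exact fun _ => .one
  | zero => exact fun _ => .zero
  | coin => exact fun _ => .coin
  | ite hd _ _ _ ihc iha ihb =>
      intro d
      rw [show (lift d (.ite _ _ _) : Tm) = .ite (lift d _) (lift d _) (lift d _) from rfl,
        Ctx.liftAt_union]
      exact .ite (Ctx.liftAt_disj d hd) (ihc d) (iha d) (ihb d)

lemma Ctx.liftAt_zero (Γ : Ctx) : Ctx.liftAt 0 Γ = Ctx.cons none Γ := by
  funext n
  cases n with
  | zero => simp [Ctx.liftAt, Ctx.cons]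
  | succ m => simp [Ctx.liftAt, Ctx.cons]

lemma Ctx.remove_cons (a : Option Ty) (Γ : Ctx) (k : Nat) :
    Ctx.remove (Ctx.cons a Γ) (k+1) = Ctx.cons a (Ctx.remove Γ k) := by
  funext n
  cases n with
  | zero => simp [Ctx.remove, Ctx.cons]
  | succ m =>
      simp only [Ctx.remove, Ctx.cons]
      by_cases h1 : m < k
      · simp [h1, Nat.succ_lt_succ h1]
      · have : ¬ m + 1 < k + 1 := by omega
        simp [h1, this]

lemma Ctx.remove_union (Γ Δ : Ctx) (k : Nat) :
    Ctx.remove (Ctx.union Γ Δ) k = Ctx.union (Ctx.remove Γ k) (Ctx.remove Δ k) := by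
  funext n
  simp only [Ctx.remove, Ctx.union]
  by_cases h1 : n < k <;> simp [h1]

lemma Ctx.remove_disj {Γ Δ : Ctx} (k : Nat) (h : Ctx.disj Γ Δ) :
    Ctx.disj (Ctx.remove Γ k) (Ctx.remove Δ k) := by
  intro n
  simp only [Ctx.remove]
  by_cases h1 : n < k
  · simpa [h1] using h n
  · simpa [h1] using h (n+1)

/-- Strengthening: substituting at an unused index only re-indexes. -/
theorem SubTy.strengthen {Γ : Ctx} {t : Tm} {B : Ty} (h : SubTy Γ t B) :
    ∀ k r, Γ k = none → SubTy (Ctx.remove Γ k) (subst t k r) B := by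
  induction h with
  | @var Γ n B h =>
      intro k r hk
      have hnk : n ≠ k := fun e => by rw [e, hk] at h; exact absurd h (by simp)
      by_cases hlt : k < n
      · simp only [subst, if_neg hnk, if_pos hlt]
        refine .var ?_
        have h1 : ¬ n - 1 < k := by omega
        have h2 : n - 1 + 1 = n := by omega
        simp [Ctx.remove, h1, h2, h]
      · have hlt' : n < k := by omega
        simp only [subst, if_neg hnk, if_neg hlt]
        exact .var (by simp [Ctx.remove, hlt', h])
  | lam _ ih =>
      intro k r hk
      exact .lam (by rw [← Ctx.remove_cons]; exact ih (k+1) (lift 0 r) hk)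
  | app hd _ _ ih1 ih2 =>
      intro k r hk
      obtain ⟨hk1, hk2⟩ := Ctx.union_eq_none hk
      rw [show (subst (.app _ _) k r : Tm) = .app (subst _ k r) (subst _ k r) from rfl,
        Ctx.remove_union]
      exact .app (Ctx.remove_disj k hd) (ih1 k r hk1) (ih2 k r hk2)
  | one => exact fun _ _ _ => .one
  | zero => exact fun _ _ _ => .zero
  | coin => exact fun _ _ _ => .coin
  | ite hd _ _ _ ihc iha ihb =>
      intro k r hk
      obtain ⟨hk1, hk2⟩ := Ctx.union_eq_none hk
      rw [show (subst (.ite _ _ _) k r : Tm) = .ite (subst _ k r) (subst _ k r) (subst _ k r) from rfl,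
        Ctx.remove_union]
      exact .ite (Ctx.remove_disj k hd) (ihc k r hk1) (iha k r hk2) (ihb k r hk2)

lemma Ctx.remove_some {Γ : Ctx} {k n : Nat} {B : Ty} (h : Ctx.remove Γ k n = some B) :
    ∃ m, m ≠ k ∧ Γ m = some B := by
  by_cases h1 : n < k
  · exact ⟨n, by omega, by simpa [Ctx.remove, h1] using h⟩
  · exact ⟨n+1, by omega, by simpa [Ctx.remove, h1] using h⟩

lemma Ctx.disj_union_left {Γ Γ' Δ : Ctx} (h : Ctx.disj (Ctx.union Γ Γ') Δ) :
    Ctx.disj Γ Δ ∧ Ctx.disj Γ' Δ := by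
  constructor <;> intro n <;> rcases h n with h' | h' <;>
    first
      | (right; exact h')
      | (left; exact (Ctx.union_eq_none h').1)
      | (left; exact (Ctx.union_eq_none h').2)

lemma Ctx.into_left {Γ₁ Γ₂ Δ : Ctx} {k n : Nat} {B : Ty}
    (h : Ctx.remove Γ₁ k n = some B) :
    Ctx.union (Ctx.remove (Ctx.union Γ₁ Γ₂) k) Δ n = some B := by
  rw [Ctx.remove_union]
  exact Ctx.union_some_left (Ctx.union_some_left h)

lemma Ctx.into_right {Γ₁ Γ₂ Δ : Ctx} {k n : Nat} {B : Ty} (hd : Ctx.disj Γ₁ Γ₂)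
    (h : Ctx.remove Γ₂ k n = some B) :
    Ctx.union (Ctx.remove (Ctx.union Γ₁ Γ₂) k) Δ n = some B := by
  have h1 : Ctx.remove Γ₁ k n = none := by
    rcases Ctx.remove_disj k hd n with h' | h'
    · exact h'
    · rw [h'] at h; exact absurd h (by simp)
  rw [Ctx.remove_union]
  refine Ctx.union_some_left ?_
  rw [Ctx.union_none_left h1]; exact h

lemma Ctx.into_delta {Γ Δ : Ctx} {n : Nat} {B : Ty} (hd : Ctx.disj Γ Δ)
    (h : Δ n = some B) : Ctx.union Γ Δ n = some B := by
  have h1 : Γ n = none := by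
    rcases hd n with h' | h'
    · exact h'
    · rw [h'] at h; exact absurd h (by simp)
  rw [Ctx.union_none_left h1]; exact h

/-- The substitution lemma for the sub-affine system. -/
theorem SubTy.substTy {Γ : Ctx} {t : Tm} {B : Ty} (h : SubTy Γ t B) :
    ∀ (k : Nat) (Δ : Ctx) (r : Tm) (A : Ty), SubTy Δ r A → Γ k = some A →
      Ctx.disj (Ctx.remove Γ k) Δ →
      SubTy (Ctx.union (Ctx.remove Γ k) Δ) (subst t k r) B := by
  induction h with
  | @var Γ n B h =>
      intro k Δ r A hr hk hdisj
      by_cases hnk : n = k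
      · subst hnk
        rw [h] at hk; injection hk with hk; subst hk
        simp only [subst, if_pos rfl]
        refine hr.mono ?_
        intro n B hb
        exact Ctx.into_delta hdisj hb
      · by_cases hlt : k < n
        · simp only [subst, if_neg hnk, if_pos hlt]
          refine .var (Ctx.union_some_left ?_)
          have h1 : ¬ n - 1 < k := by omega
          have h2 : n - 1 + 1 = n := by omega
          simp [Ctx.remove, h1, h2, h]
        · have hlt' : n < k := by omega
          simp only [subst, if_neg hnk, if_neg hlt]
          exact .var (Ctx.union_some_left (by simp [Ctx.remove, hlt', h]))
  | @lam Γ t A' B' _ ih =>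
      intro k Δ r A hr hk hdisj
      refine .lam ?_
      have hr' : SubTy (Ctx.cons none Δ) (lift 0 r) A := by
        rw [← Ctx.liftAt_zero]; exact hr.liftTy 0
      have hdisj' : Ctx.disj (Ctx.remove (Ctx.cons (some A') Γ) (k+1)) (Ctx.cons none Δ) := by
        rw [Ctx.remove_cons]
        intro n
        cases n with
        | zero => right; rfl
        | succ m => exact hdisj m
      have := ih (k+1) (Ctx.cons none Δ) (lift 0 r) A hr' hk hdisj'
      rw [Ctx.remove_cons] at this
      refine this.mono ?_
      intro n B hb
      cases n <;> exact hb
  | @app Γ₁ Γ₂ t u A' B' hd h1 h2 ih1 ih2 =>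
      intro k Δ r A hr hk hdisj
      rw [show (subst (.app _ _) k r : Tm) = .app (subst _ k r) (subst _ k r) from rfl]
      obtain ⟨hd1, hd2⟩ := Ctx.disj_union_left (by rwa [Ctx.remove_union] at hdisj)
      rcases Ctx.union_cases hk with hk1 | ⟨hk1, hk2⟩
      · have hk2 : Γ₂ k = none := by
          rcases hd k with h' | h'
          · rw [h'] at hk1; exact absurd hk1 (by simp)
          · exact h'
        refine SubTy.mono (.app ?_ (ih1 k Δ r A hr hk1 hd1) (h2.strengthen k r hk2)) ?_
        · intro n
          rcases Ctx.remove_disj k hd n with h' | h'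
          · rcases hd2 n with h'' | h''
            · right; exact h''
            · left; rw [Ctx.union_none_left h']; exact h''
          · right; exact h'
        · intro n B hb
          rcases Ctx.union_cases hb with hb' | ⟨hb1, hb2⟩
          · rcases Ctx.union_cases hb' with hb'' | ⟨_, hb''⟩
            · exact Ctx.into_left hb''
            · exact Ctx.into_delta hdisj hb''
          · exact Ctx.into_right hd hb2
      · refine SubTy.mono (.app ?_ (h1.strengthen k r hk1) (ih2 k Δ r A hr hk2 hd2)) ?_
        · intro n
          rcases Ctx.remove_disj k hd n with h' | h'
          · left; exact h'
          · rcases hd1 n with h'' | h''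
            · left; exact h''
            · right; rw [Ctx.union_none_left h']; exact h''
        · intro n B hb
          rcases Ctx.union_cases hb with hb' | ⟨hb1, hb2⟩
          · exact Ctx.into_left hb'
          · rcases Ctx.union_cases hb2 with hb'' | ⟨_, hb''⟩
            · exact Ctx.into_right hd hb''
            · exact Ctx.into_delta hdisj hb''
  | one => exact fun _ _ _ _ _ _ _ => .one
  | zero => exact fun _ _ _ _ _ _ _ => .zero
  | coin => exact fun _ _ _ _ _ _ _ => .coin
  | @ite Γ₁ Γ₂ c a b A' hd hc ha hb ihc iha ihb =>
      intro k Δ r A hr hk hdisj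
      rw [show (subst (.ite _ _ _) k r : Tm)
            = .ite (subst _ k r) (subst _ k r) (subst _ k r) from rfl]
      obtain ⟨hd1, hd2⟩ := Ctx.disj_union_left (by rwa [Ctx.remove_union] at hdisj)
      rcases Ctx.union_cases hk with hk1 | ⟨hk1, hk2⟩
      · have hk2 : Γ₂ k = none := by
          rcases hd k with h' | h'
          · rw [h'] at hk1; exact absurd hk1 (by simp)
          · exact h'
        refine SubTy.mono (.ite ?_ (ihc k Δ r A hr hk1 hd1)
          (ha.strengthen k r hk2) (hb.strengthen k r hk2)) ?_
        · intro n
          rcases Ctx.remove_disj k hd n with h' | h'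
          · rcases hd2 n with h'' | h''
            · right; exact h''
            · left; rw [Ctx.union_none_left h']; exact h''
          · right; exact h'
        · intro n B hb'
          rcases Ctx.union_cases hb' with hb'' | ⟨hb1, hb2⟩
          · rcases Ctx.union_cases hb'' with hb3 | ⟨_, hb3⟩
            · exact Ctx.into_left hb3
            · exact Ctx.into_delta hdisj hb3
          · exact Ctx.into_right hd hb2
      · refine SubTy.mono (.ite ?_ (hc.strengthen k r hk1)
          (iha k Δ r A hr hk2 hd2) (ihb k Δ r A hr hk2 hd2)) ?_
        · intro n
          rcases Ctx.remove_disj k hd n with h' | h'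
          · left; exact h'
          · rcases hd1 n with h'' | h''
            · left; exact h''
            · right; rw [Ctx.union_none_left h']; exact h''
        · intro n B hb'
          rcases Ctx.union_cases hb' with hb'' | ⟨hb1, hb2⟩
          · exact Ctx.into_left hb''
          · rcases Ctx.union_cases hb2 with hb3 | ⟨_, hb3⟩
            · exact Ctx.into_right hd hb3
            · exact Ctx.into_delta hdisj hb3

/-- subject reduction for the sub-affine λ¢:
    if Γ ⊢ t : A and t →_p r then Γ ⊢ r : A. -/
theorem subaffine_subject_reduction {Γ : Ctx} {t : Tm} {A : Ty} {p : ℚ} {r : Tm}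
    (ht : SubTy Γ t A) (h : Step t p r) : SubTy Γ r A := by
  induction h generalizing Γ A with
  | beta t r =>
      cases ht with
      | app hd h1 h2 =>
          cases h1 with
          | lam h1 =>
              have := h1.substTy 0 _ _ _ h2 rfl ?_
              · rwa [show Ctx.remove (Ctx.cons (some _) _) 0 = _ from rfl] at this
              · exact hd
  | iteOne a b =>
      cases ht with
      | ite hd hc ha hb => exact ha.mono fun n B h => Ctx.into_delta hd h
  | iteZero a b =>
      cases ht with
      | ite hd hc ha hb => exact hb.mono fun n B h => Ctx.into_delta hd h
  | coinOne => cases ht; exact .one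
  | coinZero => cases ht; exact .zero
  | lam _ ih =>
      cases ht with
      | lam h1 => exact .lam (ih h1)
  | appL u _ ih =>
      cases ht with
      | app hd h1 h2 => exact .app hd (ih h1) h2
  | appR t _ ih =>
      cases ht with
      | app hd h1 h2 => exact .app hd h1 (ih h2)
  | iteC a b _ ih =>
      cases ht with
      | ite hd hc ha hb => exact .ite hd (ih hc) ha hb
  | iteA c b _ ih =>
      cases ht with
      | ite hd hc ha hb => exact .ite hd hc (ih ha) hb
  | iteB c a _ ih =>
      cases ht with
      | ite hd hc ha hb => exact .ite hd hc ha (ih hb)
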